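/- The supremum of D_ε(u,v) over u ∈ L_exp^ε(ρ₁), v ∈ L_exp^ε(ρ₂) is attained by a pair (u₀, v₀) with u₀ ∈ L^∞(ρ₁), v₀ ∈ L^∞(ρ₂) and ‖u₀‖_∞, ‖v₀‖_∞ ≤ (3/2)‖c‖_∞; the maximizing pair is unique up to the transformation (u,v) ↦ (u+a, v-a), a ∈ ℝ. -/

import Mathlib

open MeasureTheory Real

noncomputable section
open Classical in

/-- `u ∈ L_exp^ε(ρ)`: `u` is measurable with `0 < ∫ e^{u/ε} dρ < ∞`. -/
def Lexp {Z : Type*} [MeasurableSpace Z] (ε : ℝ) (ρ : Measure Z) (u : Z → ℝ) : Prop :=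
  Measurable u ∧ Integrable (fun z => Real.exp (u z / ε)) ρ ∧
    0 < ∫ z, Real.exp (u z / ε) ∂ρ

open Classical in
/-- The dual Entropy–Kantorovich functional, valued in `EReal` (equal to `⊥` when one of
the defining integrals is not finite). -/
def Dext {X Y : Type*} [MeasurableSpace X] [MeasurableSpace Y]
    (ρ₁ : Measure X) (ρ₂ : Measure Y) (c : X → Y → ℝ) (ε : ℝ)
    (u : X → ℝ) (v : Y → ℝ) : EReal :=
  if Integrable u ρ₁ ∧ Integrable v ρ₂ ∧
      Integrable (fun p : X × Y => Real.exp ((u p.1 + v p.2 - c p.1 p.2) / ε)) (ρ₁.prod ρ₂)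
  then (((∫ x, u x ∂ρ₁) + (∫ y, v y ∂ρ₂)
    - ε * ∫ p, Real.exp ((u p.1 + v p.2 - c p.1 p.2) / ε) ∂(ρ₁.prod ρ₂) : ℝ) : EReal)
  else ⊥

open Filter Topology

namespace EKDual

variable {Z W : Type*} [MeasurableSpace Z] [MeasurableSpace W]
  {ρ : Measure Z} [IsProbabilityMeasure ρ]

lemma integrable_of_bounds {f : Z → ℝ} (hf : Measurable f) {K : ℝ} (hK : ∀ z, |f z| ≤ K) :
    Integrable f ρ :=
  (integrable_const K).mono' hf.aestronglyMeasurable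
    (Filter.Eventually.of_forall (fun z => by simpa using hK z))

lemma integral_le_of_le {f : Z → ℝ} (hf : Integrable f ρ) {U : ℝ} (h : ∀ z, f z ≤ U) :
    ∫ z, f z ∂ρ ≤ U := by
  calc ∫ z, f z ∂ρ ≤ ∫ _z, U ∂ρ := integral_mono hf (integrable_const U) h
  _ = U := by simp

lemma le_integral_of_le {f : Z → ℝ} (hf : Integrable f ρ) {L : ℝ} (h : ∀ z, L ≤ f z) :
    L ≤ ∫ z, f z ∂ρ := by
  calc L = ∫ _z, L ∂ρ := by simp
  _ ≤ ∫ z, f z ∂ρ := integral_mono (integrable_const L) hf h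

/-- The soft-min operator. -/
def T (ε : ℝ) (ρ : Measure Z) (k : W → Z → ℝ) (u : Z → ℝ) (t : W) : ℝ :=
  -ε * Real.log (∫ z, exp ((u z - k t z) / ε) ∂ρ)

variable {ε M : ℝ} {k : W → Z → ℝ} {u u' : Z → ℝ}

lemma meas_k (hk : Measurable (Function.uncurry k)) (t : W) : Measurable (k t) :=
  hk.comp measurable_prodMk_left

lemma meas_exp_term (hε : 0 < ε) (hk : Measurable (Function.uncurry k)) (hu : Measurable u)
    (t : W) : Measurable fun z => exp ((u z - k t z) / ε) :=
  (((hu.sub (meas_k hk t)).div_const ε)).exp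

lemma exp_term_le (hε : 0 < ε) (hkb : ∀ t z, |k t z| ≤ M) {U : ℝ} (hub : ∀ z, |u z| ≤ U)
    (t : W) (z : Z) : exp ((u z - k t z) / ε) ≤ exp ((U + M) / ε) := by
  have h1 := abs_le.1 (hub z); have h2 := abs_le.1 (hkb t z)
  exact exp_le_exp.2 ((div_le_div_iff_of_pos_right hε).2 (by linarith))

lemma le_exp_term (hε : 0 < ε) (hkb : ∀ t z, |k t z| ≤ M) {U : ℝ} (hub : ∀ z, |u z| ≤ U)
    (t : W) (z : Z) : exp ((-U - M) / ε) ≤ exp ((u z - k t z) / ε) := by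
  have h1 := abs_le.1 (hub z); have h2 := abs_le.1 (hkb t z)
  exact exp_le_exp.2 ((div_le_div_iff_of_pos_right hε).2 (by linarith))

lemma int_exp_term (hε : 0 < ε) (hk : Measurable (Function.uncurry k))
    (hkb : ∀ t z, |k t z| ≤ M) (hu : Measurable u) {U : ℝ} (hub : ∀ z, |u z| ≤ U)
    (t : W) : Integrable (fun z => exp ((u z - k t z) / ε)) ρ :=
  integrable_of_bounds (meas_exp_term hε hk hu t)
    (fun z => by rw [abs_of_pos (exp_pos _)]; exact exp_term_le hε hkb hub t z)

lemma int_exp_pos (hε : 0 < ε) (hk : Measurable (Function.uncurry k))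
    (hkb : ∀ t z, |k t z| ≤ M) (hu : Measurable u) {U : ℝ} (hub : ∀ z, |u z| ≤ U)
    (t : W) : 0 < ∫ z, exp ((u z - k t z) / ε) ∂ρ :=
  lt_of_lt_of_le (exp_pos _)
    (le_integral_of_le (int_exp_term hε hk hkb hu hub t) (le_exp_term hε hkb hub t))

lemma T_exp (hε : 0 < ε) (hk : Measurable (Function.uncurry k))
    (hkb : ∀ t z, |k t z| ≤ M) (hu : Measurable u) {U : ℝ} (hub : ∀ z, |u z| ≤ U)
    (t : W) : exp (-(T ε ρ k u t) / ε) = ∫ z, exp ((u z - k t z) / ε) ∂ρ := by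
  have hI := int_exp_pos (ρ := ρ) hε hk hkb hu hub t
  rw [T]
  have h : -(-ε * Real.log (∫ z, exp ((u z - k t z) / ε) ∂ρ)) / ε
      = Real.log (∫ z, exp ((u z - k t z) / ε) ∂ρ) := by field_simp
  rw [h, exp_log hI]

lemma T_bounds (hε : 0 < ε) (hk : Measurable (Function.uncurry k))
    (hkb : ∀ t z, |k t z| ≤ M) (hu : Measurable u) {p P : ℝ} (hp : ∀ z, p ≤ u z)
    (hP : ∀ z, u z ≤ P) (t : W) :
    -P - M ≤ T ε ρ k u t ∧ T ε ρ k u t ≤ -p + M := by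
  have hub : ∀ z, |u z| ≤ max |p| |P| := fun z => by
    rw [abs_le]; constructor
    · exact le_trans (neg_le_neg (le_max_left _ _)) (le_trans (neg_abs_le p) (hp z))
    · exact le_trans (hP z) (le_trans (le_abs_self P) (le_max_right _ _))
  have hI := int_exp_pos (ρ := ρ) hε hk hkb hu hub t
  have hle : ∫ z, exp ((u z - k t z) / ε) ∂ρ ≤ exp ((P + M) / ε) := by
    apply integral_le_of_le (int_exp_term hε hk hkb hu hub t)
    intro z; have h2 := abs_le.1 (hkb t z)
    exact exp_le_exp.2 ((div_le_div_iff_of_pos_right hε).2 (by have := hP z; linarith))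
  have hge : exp ((p - M) / ε) ≤ ∫ z, exp ((u z - k t z) / ε) ∂ρ := by
    apply le_integral_of_le (int_exp_term hε hk hkb hu hub t)
    intro z; have h2 := abs_le.1 (hkb t z)
    exact exp_le_exp.2 ((div_le_div_iff_of_pos_right hε).2 (by have := hp z; linarith))
  have hlog1 : Real.log (∫ z, exp ((u z - k t z) / ε) ∂ρ) ≤ (P + M) / ε :=
    (Real.log_le_iff_le_exp hI).2 hle
  have hlog2 : (p - M) / ε ≤ Real.log (∫ z, exp ((u z - k t z) / ε) ∂ρ) := by
    rw [Real.le_log_iff_exp_le hI]; exact hge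
  constructor
  · rw [T]
    have := mul_le_mul_of_nonneg_left hlog1 hε.le
    rw [mul_div_cancel₀ _ hε.ne'] at this
    linarith
  · rw [T]
    have := mul_le_mul_of_nonneg_left hlog2 hε.le
    rw [mul_div_cancel₀ _ hε.ne'] at this
    linarith

lemma log_lin_bound {δ x X : ℝ} (hδ0 : 0 < δ) (hδ1 : δ ≤ 1) (hx : 0 ≤ x) (hX : x ≤ X) :
    Real.log (δ + (1 - δ) * Real.exp x) ≤ (1 - δ * Real.exp (-X)) * x := by
  have hxx : exp x * exp (-x) = 1 := by rw [← exp_add]; simp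
  have h1 : δ + (1 - δ) * exp x = exp x * (1 - δ * (1 - exp (-x))) := by
    linear_combination (-δ) * hxx
  have hex : exp (-x) ≤ 1 := exp_le_one_iff.2 (by linarith)
  have h2 : 0 < 1 - δ * (1 - exp (-x)) := by nlinarith [exp_pos (-x)]
  rw [h1, Real.log_mul (exp_ne_zero x) (ne_of_gt h2), Real.log_exp]
  have h3 : Real.log (1 - δ * (1 - exp (-x))) ≤ -(δ * (1 - exp (-x))) := by
    have := Real.log_le_sub_one_of_pos h2; linarith
  have h4 : x * exp (-x) ≤ 1 - exp (-x) := by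
    nlinarith [Real.add_one_le_exp x, exp_pos (-x)]
  have h5 : exp (-X) ≤ exp (-x) := exp_le_exp.2 (by linarith)
  have h6 : δ * (x * exp (-X)) ≤ δ * (x * exp (-x)) :=
    mul_le_mul_of_nonneg_left (mul_le_mul_of_nonneg_left h5 hx) hδ0.le
  have h7 : δ * (x * exp (-x)) ≤ δ * (1 - exp (-x)) := mul_le_mul_of_nonneg_left h4 hδ0.le
  linarith

lemma T_osc (hε : 0 < ε) (hk : Measurable (Function.uncurry k))
    (hkb : ∀ t z, |k t z| ≤ M) (hu : Measurable u) {U : ℝ} (hub : ∀ z, |u z| ≤ U)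
    (t t' : W) : T ε ρ k u t - T ε ρ k u t' ≤ 2 * M := by
  have hI := int_exp_pos (ρ := ρ) hε hk hkb hu hub t
  have hI' := int_exp_pos (ρ := ρ) hε hk hkb hu hub t'
  have hpt : ∀ z, exp (-(2*M) / ε) * exp ((u z - k t' z) / ε) ≤ exp ((u z - k t z) / ε) := by
    intro z
    rw [← exp_add]
    apply exp_le_exp.2
    have h2 := abs_le.1 (hkb t z); have h3 := abs_le.1 (hkb t' z)
    rw [← add_div]
    apply (div_le_div_iff_of_pos_right hε).2
    linarith
  have hint : exp (-(2*M)/ε) * ∫ z, exp ((u z - k t' z) / ε) ∂ρ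
      ≤ ∫ z, exp ((u z - k t z) / ε) ∂ρ := by
    rw [← integral_const_mul]
    exact integral_mono ((int_exp_term hε hk hkb hu hub t').const_mul _)
      (int_exp_term hε hk hkb hu hub t) hpt
  have hlog : -(2*M)/ε + Real.log (∫ z, exp ((u z - k t' z) / ε) ∂ρ)
      ≤ Real.log (∫ z, exp ((u z - k t z) / ε) ∂ρ) := by
    have := Real.log_le_log (by positivity) hint
    rwa [Real.log_mul (exp_ne_zero _) hI'.ne', Real.log_exp] at this
  rw [T, T]
  have := mul_le_mul_of_nonneg_left hlog hε.le
  have hc : ε * (-(2*M)/ε) = -(2*M) := by field_simp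
  nlinarith [this]

lemma T_nonexp (hε : 0 < ε) (hk : Measurable (Function.uncurry k))
    (hkb : ∀ t z, |k t z| ≤ M) (hu : Measurable u) (hu' : Measurable u')
    {U : ℝ} (hub : ∀ z, |u z| ≤ U) (hub' : ∀ z, |u' z| ≤ U)
    {d : ℝ} (hd : ∀ z, |u z - u' z| ≤ d) (t : W) :
    |T ε ρ k u t - T ε ρ k u' t| ≤ d := by
  have key : ∀ (w w' : Z → ℝ), Measurable w → Measurable w' → (∀ z, |w z| ≤ U) →
      (∀ z, |w' z| ≤ U) → (∀ z, |w z - w' z| ≤ d) →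
      T ε ρ k w t - T ε ρ k w' t ≤ d := by
    intro w w' hw hw' hwb hwb' hwd
    have hI := int_exp_pos (ρ := ρ) hε hk hkb hw hwb t
    have hI' := int_exp_pos (ρ := ρ) hε hk hkb hw' hwb' t
    have hpt : ∀ z, exp (-d / ε) * exp ((w' z - k t z) / ε) ≤ exp ((w z - k t z) / ε) := by
      intro z
      rw [← exp_add]
      apply exp_le_exp.2
      have h2 := abs_le.1 (hwd z)
      rw [← add_div]
      apply (div_le_div_iff_of_pos_right hε).2
      linarith
    have hint : exp (-d/ε) * ∫ z, exp ((w' z - k t z) / ε) ∂ρ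
        ≤ ∫ z, exp ((w z - k t z) / ε) ∂ρ := by
      rw [← integral_const_mul]
      exact integral_mono ((int_exp_term hε hk hkb hw' hwb' t).const_mul _)
        (int_exp_term hε hk hkb hw hwb t) hpt
    have hlog : -d/ε + Real.log (∫ z, exp ((w' z - k t z) / ε) ∂ρ)
        ≤ Real.log (∫ z, exp ((w z - k t z) / ε) ∂ρ) := by
      have := Real.log_le_log (by positivity) hint
      rwa [Real.log_mul (exp_ne_zero _) hI'.ne', Real.log_exp] at this
    rw [T, T]
    have := mul_le_mul_of_nonneg_left hlog hε.le
    have hc : ε * (-d/ε) = -d := by field_simp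
    nlinarith [this]
  rw [abs_le]
  constructor
  · have := key u' u hu' hu hub' hub (fun z => by rw [abs_sub_comm]; exact hd z)
    linarith
  · exact key u u' hu hu' hub hub' hd

lemma T_measurable (hε : 0 < ε) (hk : Measurable (Function.uncurry k))
    (hu : Measurable u) : Measurable (T ε ρ k u) := by
  have hm : StronglyMeasurable (fun p : W × Z => exp ((u p.2 - Function.uncurry k p) / ε)) :=
    (((hu.comp measurable_snd).sub hk).div_const ε).exp.stronglyMeasurable
  have hint : StronglyMeasurable (fun t => ∫ z, exp ((u z - k t z) / ε) ∂ρ) :=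
    hm.integral_prod_right'
  exact measurable_const.mul (Real.measurable_log.comp hint.measurable)


section Contract

lemma int_exp_self (hε : 0 < ε) (hu : Measurable u) {U : ℝ} (hub : ∀ z, |u z| ≤ U) :
    Integrable (fun z => exp (u z / ε)) ρ := by
  apply integrable_of_bounds ((hu.div_const ε).exp)
  intro z
  rw [abs_of_pos (exp_pos _)]
  exact exp_le_exp.2 ((div_le_div_iff_of_pos_right hε).2 (le_trans (le_abs_self _) (hub z)))

lemma int_exp_self_pos (hε : 0 < ε) (hu : Measurable u) {U : ℝ} (hub : ∀ z, |u z| ≤ U) :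
    0 < ∫ z, exp (u z / ε) ∂ρ := by
  apply lt_of_lt_of_le (exp_pos ((-U)/ε))
  apply le_integral_of_le (int_exp_self hε hu hub)
  intro z
  exact exp_le_exp.2 ((div_le_div_iff_of_pos_right hε).2 (by have := abs_le.1 (hub z); linarith))

lemma ratio_bounds (hε : 0 < ε) (hM : 0 ≤ M) (hk : Measurable (Function.uncurry k))
    (hkb : ∀ t z, |k t z| ≤ M) (hu : Measurable u) (hu' : Measurable u')
    {U : ℝ} (hub : ∀ z, |u z| ≤ U) (hub' : ∀ z, |u' z| ≤ U)
    {a b : ℝ} (ha : ∀ z, a ≤ u z - u' z) (hb : ∀ z, u z - u' z ≤ b) (s : W) :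
    (∫ z, exp ((u' z - k s z) / ε) ∂ρ) *
        (exp (-(2*M)/ε) * ((∫ z, exp (u z / ε) ∂ρ) / (∫ z, exp (u' z / ε) ∂ρ))
          + (1 - exp (-(2*M)/ε)) * exp (a / ε))
      ≤ ∫ z, exp ((u z - k s z) / ε) ∂ρ ∧
    ∫ z, exp ((u z - k s z) / ε) ∂ρ
      ≤ (∫ z, exp ((u' z - k s z) / ε) ∂ρ) *
        (exp (-(2*M)/ε) * ((∫ z, exp (u z / ε) ∂ρ) / (∫ z, exp (u' z / ε) ∂ρ))
          + (1 - exp (-(2*M)/ε)) * exp (b / ε)) := by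
  set δ := exp (-(2*M)/ε) with hδdef
  have hδ0 : 0 < δ := exp_pos _
  have hδ1 : δ ≤ 1 := exp_le_one_iff.2 (by apply div_nonpos_of_nonpos_of_nonneg <;> linarith)
  set F := ∫ z, exp (u z / ε) ∂ρ with hFdef
  set E := ∫ z, exp (u' z / ε) ∂ρ with hEdef
  set N := ∫ z, exp ((u' z - k s z) / ε) ∂ρ with hNdef
  have hE : 0 < E := int_exp_self_pos hε hu' hub'
  have hN : 0 < N := int_exp_pos hε hk hkb hu' hub' s
  have hintN := int_exp_term (ρ := ρ) hε hk hkb hu' hub' s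
  have hintI := int_exp_term (ρ := ρ) hε hk hkb hu hub s
  have hintE := int_exp_self (ρ := ρ) hε hu' hub'
  have hintF := int_exp_self (ρ := ρ) hε hu hub
  -- N ≤ exp(M/ε) * E
  have claim1 : N ≤ exp (M/ε) * E := by
    rw [hNdef, hEdef, ← integral_const_mul]
    apply integral_mono hintN (hintE.const_mul _)
    intro z
    show exp ((u' z - k s z) / ε) ≤ exp (M/ε) * exp (u' z / ε)
    rw [← exp_add, ← add_div]
    exact exp_le_exp.2 ((div_le_div_iff_of_pos_right hε).2 (by have := abs_le.1 (hkb s z); linarith))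
  have hNE : N / E ≤ exp (M/ε) := (div_le_iff₀ hE).2 claim1
  set r : Z → ℝ := fun z => exp ((u' z - k s z) / ε) - δ * (N/E) * exp (u' z / ε) with hrdef
  have hr0 : ∀ z, 0 ≤ r z := by
    intro z
    rw [hrdef]
    simp only
    have h1 : δ * (N/E) * exp (u' z / ε) ≤ δ * exp (M/ε) * exp (u' z / ε) :=
      mul_le_mul_of_nonneg_right (mul_le_mul_of_nonneg_left hNE hδ0.le) (exp_pos _).le
    have h2 : δ * exp (M/ε) * exp (u' z / ε) ≤ exp ((u' z - k s z) / ε) := by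
      rw [hδdef, ← exp_add, ← exp_add, ← add_div, ← add_div]
      exact exp_le_exp.2 ((div_le_div_iff_of_pos_right hε).2 (by have := abs_le.1 (hkb s z); linarith))
    linarith
  have hrint : Integrable r ρ := hintN.sub (hintE.const_mul _)
  have hrI : ∫ z, r z ∂ρ = N * (1 - δ) := by
    rw [hrdef]
    simp only
    rw [integral_sub hintN (hintE.const_mul _), integral_const_mul, ← hNdef, ← hEdef]
    field_simp
  have hdec : ∀ z, exp ((u z - k s z) / ε)
      = δ * (N/E) * exp (u z / ε) + exp ((u z - u' z) / ε) * r z := by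
    intro z
    have e1 : exp ((u z - u' z)/ε) * exp ((u' z - k s z)/ε) = exp ((u z - k s z)/ε) := by
      rw [← exp_add]; congr 1; ring
    have e2 : exp ((u z - u' z)/ε) * exp (u' z/ε) = exp (u z/ε) := by
      rw [← exp_add]; congr 1; ring
    rw [hrdef]
    simp only
    linear_combination δ * (N / E) * e2 - e1
  have hbdd : ∃ C, ∀ z, ‖exp ((u z - u' z) / ε)‖ ≤ C := by
    refine ⟨exp (b / ε), fun z => ?_⟩
    rw [norm_eq_abs, abs_of_pos (exp_pos _)]
    exact exp_le_exp.2 ((div_le_div_iff_of_pos_right hε).2 (hb z))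
  have hmix : Integrable (fun z => exp ((u z - u' z) / ε) * r z) ρ :=
    hrint.bdd_mul (((hu.sub hu').div_const ε).exp).aestronglyMeasurable (ae_of_all _ hbdd.choose_spec)
  have hIeq : ∫ z, exp ((u z - k s z) / ε) ∂ρ
      = δ * (N/E) * F + ∫ z, exp ((u z - u' z) / ε) * r z ∂ρ := by
    rw [integral_congr_ae (ae_of_all _ hdec), integral_add ((hintF.const_mul _)) hmix,
      integral_const_mul, ← hFdef]
  have hup : ∫ z, exp ((u z - u' z) / ε) * r z ∂ρ ≤ exp (b / ε) * (N * (1 - δ)) := by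
    rw [← hrI, ← integral_const_mul]
    apply integral_mono hmix (hrint.const_mul _)
    intro z
    show exp ((u z - u' z) / ε) * r z ≤ exp (b / ε) * r z
    exact mul_le_mul_of_nonneg_right (exp_le_exp.2 ((div_le_div_iff_of_pos_right hε).2 (hb z))) (hr0 z)
  have hlo : exp (a / ε) * (N * (1 - δ)) ≤ ∫ z, exp ((u z - u' z) / ε) * r z ∂ρ := by
    rw [← hrI, ← integral_const_mul]
    apply integral_mono (hrint.const_mul _) hmix
    intro z
    show exp (a / ε) * r z ≤ exp ((u z - u' z) / ε) * r z
    exact mul_le_mul_of_nonneg_right (exp_le_exp.2 ((div_le_div_iff_of_pos_right hε).2 (ha z))) (hr0 z)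
  constructor
  · rw [hIeq]
    have : N * (δ * (F / E) + (1 - δ) * exp (a/ε))
        = δ * (N/E) * F + exp (a/ε) * (N * (1 - δ)) := by ring
    rw [this]
    linarith
  · rw [hIeq]
    have : N * (δ * (F / E) + (1 - δ) * exp (b/ε))
        = δ * (N/E) * F + exp (b/ε) * (N * (1 - δ)) := by ring
    rw [this]
    linarith

lemma T_contract (hε : 0 < ε) (hM : 0 ≤ M) (hk : Measurable (Function.uncurry k))
    (hkb : ∀ t z, |k t z| ≤ M) (hu : Measurable u) (hu' : Measurable u')
    {U : ℝ} (hub : ∀ z, |u z| ≤ U) (hub' : ∀ z, |u' z| ≤ U)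
    {a b : ℝ} (ha : ∀ z, a ≤ u z - u' z) (hb : ∀ z, u z - u' z ≤ b)
    (hba : b - a ≤ 2 * M) (t t' : W) :
    (T ε ρ k u t - T ε ρ k u' t) - (T ε ρ k u t' - T ε ρ k u' t')
      ≤ (1 - exp (-(2*M)/ε) ^ 2) * (b - a) := by
  have hne : Nonempty Z := by
    by_contra h
    rw [not_nonempty_iff] at h
    have : ρ Set.univ = 0 := by simp [Set.univ_eq_empty_iff.2 h]
    rw [measure_univ] at this
    exact one_ne_zero this
  obtain ⟨z⟩ := hne
  have hab : a ≤ b := le_trans (ha z) (hb z)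
  set δ := exp (-(2*M)/ε) with hδdef
  have hδ0 : 0 < δ := exp_pos _
  have hδ1 : δ ≤ 1 := exp_le_one_iff.2 (by apply div_nonpos_of_nonpos_of_nonneg <;> linarith)
  set F := ∫ z, exp (u z / ε) ∂ρ with hFdef
  set E := ∫ z, exp (u' z / ε) ∂ρ with hEdef
  have hF : 0 < F := int_exp_self_pos hε hu hub
  have hE : 0 < E := int_exp_self_pos hε hu' hub'
  set S := F / E with hSdef
  have hS0 : 0 < S := div_pos hF hE
  set α := exp (a/ε) with hαdef
  set β := exp (b/ε) with hβdef
  have hαβ : α ≤ β := exp_le_exp.2 ((div_le_div_iff_of_pos_right hε).2 hab)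
  have hSα : α ≤ S := by
    rw [hSdef, le_div_iff₀ hE]
    rw [hαdef, hFdef, hEdef, ← integral_const_mul]
    apply integral_mono ((int_exp_self hε hu' hub').const_mul _) (int_exp_self hε hu hub)
    intro z
    show exp (a / ε) * exp (u' z / ε) ≤ exp (u z / ε)
    rw [← exp_add, ← add_div]
    exact exp_le_exp.2 ((div_le_div_iff_of_pos_right hε).2 (by have := ha z; linarith))
  have hlowα : 0 < δ * S + (1-δ) * α :=
    add_pos_of_pos_of_nonneg (mul_pos hδ0 hS0)
      (mul_nonneg (by linarith) (exp_pos _).le)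
  have hlowβ : 0 < δ * S + (1-δ) * β :=
    add_pos_of_pos_of_nonneg (mul_pos hδ0 hS0)
      (mul_nonneg (by linarith) (exp_pos _).le)
  have hmain : ∀ s : W,
      -ε * Real.log (δ * S + (1-δ) * β) ≤ T ε ρ k u s - T ε ρ k u' s ∧
      T ε ρ k u s - T ε ρ k u' s ≤ -ε * Real.log (δ * S + (1-δ) * α) := by
    intro s
    obtain ⟨h1, h2⟩ := ratio_bounds (ρ := ρ) hε hM hk hkb hu hu' hub hub' ha hb s
    set I := ∫ z, exp ((u z - k s z) / ε) ∂ρ with hIdef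
    set N := ∫ z, exp ((u' z - k s z) / ε) ∂ρ with hNdef
    have hI : 0 < I := int_exp_pos hε hk hkb hu hub s
    have hN : 0 < N := int_exp_pos hε hk hkb hu' hub' s
    have hTT : T ε ρ k u s - T ε ρ k u' s = -ε * Real.log (I / N) := by
      rw [T, T, ← hIdef, ← hNdef, Real.log_div hI.ne' hN.ne']
      ring
    have hr1 : δ * S + (1-δ) * α ≤ I / N := (le_div_iff₀ hN).2 (by linarith)
    have hr2 : I / N ≤ δ * S + (1-δ) * β := (div_le_iff₀ hN).2 (by linarith)
    have hlog1 : Real.log (δ * S + (1-δ) * α) ≤ Real.log (I / N) :=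
      Real.log_le_log hlowα hr1
    have hlog2 : Real.log (I / N) ≤ Real.log (δ * S + (1-δ) * β) :=
      Real.log_le_log (div_pos hI hN) hr2
    constructor
    · rw [hTT]
      have := mul_le_mul_of_nonneg_left hlog2 hε.le
      linarith
    · rw [hTT]
      have := mul_le_mul_of_nonneg_left hlog1 hε.le
      linarith
  obtain ⟨_, r1⟩ := hmain t
  obtain ⟨l2, _⟩ := hmain t'
  have hγ1 : 1 ≤ exp ((b-a)/ε) :=
    one_le_exp (div_nonneg (by linarith) hε.le)
  have hβα : β = exp ((b-a)/ε) * α := by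
    rw [hβdef, hαdef, ← exp_add]; congr 1; ring
  have hratio : δ * S + (1-δ) * β ≤ (δ + (1-δ) * exp ((b-a)/ε)) * (δ * S + (1-δ) * α) := by
    nlinarith [mul_nonneg (mul_nonneg hδ0.le (sub_nonneg.2 hδ1))
      (mul_nonneg (sub_nonneg.2 hγ1) (sub_nonneg.2 hSα)), exp_pos ((b-a)/ε)]
  have hpos2 : 0 < δ + (1-δ) * exp ((b-a)/ε) :=
    add_pos_of_pos_of_nonneg hδ0 (mul_nonneg (by linarith) (exp_pos _).le)
  have hlog3 : Real.log (δ * S + (1-δ) * β)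
      ≤ Real.log (δ + (1-δ) * exp ((b-a)/ε)) + Real.log (δ * S + (1-δ) * α) := by
    have := Real.log_le_log hlowβ hratio
    rwa [Real.log_mul hpos2.ne' hlowα.ne'] at this
  have helem : Real.log (δ + (1 - δ) * exp ((b-a)/ε))
      ≤ (1 - δ * exp (-((2*M)/ε))) * ((b-a)/ε) :=
    log_lin_bound hδ0 hδ1 (div_nonneg (by linarith) hε.le) ((div_le_div_iff_of_pos_right hε).2 hba)
  have hδconv : exp (-((2*M)/ε)) = δ := by rw [hδdef, neg_div]
  rw [hδconv] at helem
  have hfin : ε * ((1 - δ * δ) * ((b-a)/ε)) = (1 - δ^2) * (b-a) := by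
    have h := div_mul_cancel₀ (b-a) hε.ne'
    linear_combination (1 - δ*δ) * h
  have hchain : ε * Real.log (δ + (1-δ) * exp ((b-a)/ε)) ≤ (1 - δ^2) * (b-a) := by
    have := mul_le_mul_of_nonneg_left helem hε.le
    rw [hfin] at this
    exact this
  have hml := mul_le_mul_of_nonneg_left hlog3 hε.le
  nlinarith [hml, hchain]

lemma T_center (hε : 0 < ε) (hk : Measurable (Function.uncurry k))
    (hkb : ∀ t z, |k t z| ≤ M) (hu : Measurable u) {U : ℝ} (hub : ∀ z, |u z| ≤ U)
    (t : W) : |T ε ρ k u t - (-ε * Real.log (∫ z, exp (u z / ε) ∂ρ))| ≤ M := by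
  set E := ∫ z, exp (u z / ε) ∂ρ with hEdef
  have hE : 0 < E := int_exp_self_pos hε hu hub
  set I := ∫ z, exp ((u z - k t z) / ε) ∂ρ with hIdef
  have hI : 0 < I := int_exp_pos hε hk hkb hu hub t
  have hup : I ≤ exp (M / ε) * E := by
    rw [hIdef, hEdef, ← integral_const_mul]
    apply integral_mono (int_exp_term hε hk hkb hu hub t) ((int_exp_self hε hu hub).const_mul _)
    intro z
    show exp ((u z - k t z) / ε) ≤ exp (M / ε) * exp (u z / ε)
    rw [← exp_add, ← add_div]
    exact exp_le_exp.2 ((div_le_div_iff_of_pos_right hε).2 (by have := abs_le.1 (hkb t z); linarith))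
  have hlo : exp (-M / ε) * E ≤ I := by
    rw [hIdef, hEdef, ← integral_const_mul]
    apply integral_mono ((int_exp_self hε hu hub).const_mul _) (int_exp_term hε hk hkb hu hub t)
    intro z
    show exp (-M / ε) * exp (u z / ε) ≤ exp ((u z - k t z) / ε)
    rw [← exp_add, ← add_div]
    exact exp_le_exp.2 ((div_le_div_iff_of_pos_right hε).2 (by have := abs_le.1 (hkb t z); linarith))
  have hlog1 : Real.log I ≤ M / ε + Real.log E := by
    have := Real.log_le_log hI hup
    rwa [Real.log_mul (exp_ne_zero _) hE.ne', Real.log_exp] at this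
  have hlog2 : -M / ε + Real.log E ≤ Real.log I := by
    have := Real.log_le_log (by positivity) hlo
    rwa [Real.log_mul (exp_ne_zero _) hE.ne', Real.log_exp] at this
  rw [T, ← hIdef, abs_le]
  have h1 := mul_le_mul_of_nonneg_left hlog1 hε.le
  have h2 := mul_le_mul_of_nonneg_left hlog2 hε.le
  have hc1 : ε * (M / ε) = M := by field_simp
  have hc2 : ε * (-M / ε) = -M := by field_simp
  constructor
  · nlinarith [h2]
  · nlinarith [h1]

lemma nonempty_of_prob {Z' : Type*} [MeasurableSpace Z'] (ρ' : Measure Z')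
    [IsProbabilityMeasure ρ'] : Nonempty Z' := by
  by_contra h
  rw [not_nonempty_iff] at h
  have h0 : ρ' Set.univ = 0 := by simp [Set.univ_eq_empty_iff.2 h]
  rw [measure_univ] at h0
  exact one_ne_zero h0

end Contract

section Main

variable {X Y : Type*} [MeasurableSpace X] [MeasurableSpace Y]

set_option maxHeartbeats 2000000 in
theorem exists_schroedinger (ρ₁ : Measure X) [IsProbabilityMeasure ρ₁]
    (ρ₂ : Measure Y) [IsProbabilityMeasure ρ₂] (ε : ℝ) (c : X → Y → ℝ) (M : ℝ)
    (hε : 0 < ε) (hc : Measurable (Function.uncurry c)) (hM : ∀ x y, |c x y| ≤ M) :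
    ∃ (u₀ : X → ℝ) (v₀ : Y → ℝ), Measurable u₀ ∧ Measurable v₀ ∧
      (∀ x, |u₀ x| ≤ 3 / 2 * M) ∧ (∀ y, |v₀ y| ≤ 3 / 2 * M) ∧
      (∀ y, ∫ x, exp ((u₀ x + v₀ y - c x y) / ε) ∂ρ₁ = 1) ∧
      (∀ x, ∫ y, exp ((u₀ x + v₀ y - c x y) / ε) ∂ρ₂ = 1) := by
  obtain ⟨x₀⟩ := nonempty_of_prob ρ₁
  obtain ⟨y₀⟩ := nonempty_of_prob ρ₂
  have hM0 : 0 ≤ M := le_trans (abs_nonneg _) (hM x₀ y₀)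
  haveI : Nonempty X := ⟨x₀⟩
  haveI : Nonempty Y := ⟨y₀⟩
  set kB : Y → X → ℝ := fun y x => c x y with hkBdef
  have hkB : Measurable (Function.uncurry kB) := hc.comp measurable_swap
  have hkBb : ∀ y x, |kB y x| ≤ M := fun y x => hM x y
  have hcb : ∀ x y, |c x y| ≤ M := hM
  set q : ℝ := 1 - exp (-(2*M)/ε) ^ 2 with hqdef
  have hδ0 : 0 < exp (-(2*M)/ε) := exp_pos _
  have hδ1 : exp (-(2*M)/ε) ≤ 1 :=
    exp_le_one_iff.2 (by apply div_nonpos_of_nonpos_of_nonneg <;> linarith)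
  have hq0 : 0 ≤ q := by rw [hqdef]; nlinarith
  have hq1 : q < 1 := by rw [hqdef]; nlinarith
  set A : (Y → ℝ) → X → ℝ := T ε ρ₂ c with hAdef
  set B : (X → ℝ) → Y → ℝ := T ε ρ₁ kB with hBdef
  set Φ : (X → ℝ) → X → ℝ := fun u x => A (B u) x - A (B u) x₀ with hΦdef
  set seq : ℕ → X → ℝ := fun n => Φ^[n] (fun _ => 0) with hseqdef
  have hseq0 : seq 0 = fun _ => 0 := rfl
  have hseqS : ∀ n, seq (n + 1) = Φ (seq n) := by
    intro n
    rw [hseqdef]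
    simp only
    rw [Function.iterate_succ_apply']
  -- basic invariant
  have hInv : ∀ n, Measurable (seq n) ∧ (∀ x, |seq n x| ≤ 2*M) ∧ seq n x₀ = 0 := by
    intro n
    induction n with
    | zero =>
      refine ⟨measurable_const, fun x => ?_, rfl⟩
      simp only [hseq0, abs_zero]
      linarith
    | succ n ih =>
      obtain ⟨hm, hb, _⟩ := ih
      have hBm : Measurable (B (seq n)) := T_measurable hε hkB hm
      have hBb : ∀ y, |B (seq n) y| ≤ 3*M := by
        intro y
        have := T_bounds (ρ := ρ₁) hε hkB hkBb hm (p := -(2*M)) (P := 2*M)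
          (fun x => (abs_le.1 (hb x)).1) (fun x => (abs_le.1 (hb x)).2) y
        rw [abs_le]; constructor <;> [linarith [this.1]; linarith [this.2]]
      have hAm : Measurable (A (B (seq n))) := T_measurable hε hc hBm
      refine ⟨by rw [hseqS n]; exact hAm.sub measurable_const, fun x => ?_,
        by rw [hseqS n]; simp [hΦdef]⟩
      rw [hseqS n]
      show |A (B (seq n)) x - A (B (seq n)) x₀| ≤ 2*M
      have h1 := T_osc (ρ := ρ₂) hε hc hcb hBm hBb x x₀
      have h2 := T_osc (ρ := ρ₂) hε hc hcb hBm hBb x₀ x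
      rw [abs_le]; constructor <;> [linarith [h2]; linarith [h1]]
  have hBmb : ∀ u : X → ℝ, Measurable u → (∀ x, |u x| ≤ 2*M) →
      Measurable (B u) ∧ (∀ y, |B u y| ≤ 3*M) := by
    intro u hm hb
    refine ⟨T_measurable hε hkB hm, fun y => ?_⟩
    have := T_bounds (ρ := ρ₁) hε hkB hkBb hm (p := -(2*M)) (P := 2*M)
      (fun x => (abs_le.1 (hb x)).1) (fun x => (abs_le.1 (hb x)).2) y
    rw [abs_le]; exact ⟨by linarith [this.1], by linarith [this.2]⟩
  -- contraction invariant
  have hJ : ∀ n, ∀ x x', (seq (n+1) x - seq n x) - (seq (n+1) x' - seq n x')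
      ≤ 2*M * q^n := by
    intro n
    induction n with
    | zero =>
      intro x x'
      obtain ⟨hm0, hb0, _⟩ := hInv 0
      obtain ⟨hBm, hBb⟩ := hBmb (seq 0) hm0 hb0
      have h1 := T_osc (ρ := ρ₂) hε hc hcb hBm hBb x x'
      have h00 : ∀ x, seq 0 x = 0 := fun _ => rfl
      rw [hseqS 0]
      show (A (B (seq 0)) x - A (B (seq 0)) x₀ - seq 0 x)
        - (A (B (seq 0)) x' - A (B (seq 0)) x₀ - seq 0 x') ≤ 2*M * q^0
      rw [h00 x, h00 x', pow_zero]
      linarith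
    | succ n ih =>
      obtain ⟨hm, hb, hp⟩ := hInv n
      obtain ⟨hm', hb', hp'⟩ := hInv (n+1)
      obtain ⟨hBm, hBb⟩ := hBmb (seq n) hm hb
      obtain ⟨hBm', hBb'⟩ := hBmb (seq (n+1)) hm' hb'
      have hqn0 : (0:ℝ) ≤ q^n := pow_nonneg hq0 n
      have hqn1 : q^n ≤ 1 := pow_le_one₀ hq0 hq1.le
      have hbdd : BddBelow (Set.range fun x => seq (n+1) x - seq n x) := by
        refine ⟨-(4*M), ?_⟩
        rintro r ⟨x, rfl⟩
        have h1 := abs_le.1 (hb x); have h2 := abs_le.1 (hb' x)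
        simp only
        linarith [h1.1, h1.2, h2.1, h2.2]
      set aI := ⨅ x, (seq (n+1) x - seq n x) with haIdef
      have haI : ∀ x, aI ≤ seq (n+1) x - seq n x := fun x => ciInf_le hbdd x
      have haIub : ∀ x, seq (n+1) x - seq n x ≤ aI + 2*M*q^n := by
        intro x
        have hle : seq (n+1) x - 2*M*q^n - seq n x ≤ aI := by
          apply le_ciInf
          intro x'
          have := ih x x'
          linarith
        linarith
      have hcon1 : ∀ y y', (B (seq (n+1)) y - B (seq n) y)
          - (B (seq (n+1)) y' - B (seq n) y') ≤ q * (2*M*q^n) := by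
        intro y y'
        have hX0 : (0:ℝ) ≤ 2*M*q^n := mul_nonneg (by linarith) hqn0
        have := T_contract (ρ := ρ₁) hε hM0 hkB hkBb hm' hm (U := 2*M) hb' hb
          haI haIub (by nlinarith) y y'
        rw [← hqdef] at this
        have heq : q * (aI + 2*M*q^n - aI) = q * (2*M*q^n) := by ring
        linarith [heq ▸ this]
      have hbdd2 : BddBelow (Set.range fun y => B (seq (n+1)) y - B (seq n) y) := by
        refine ⟨-(6*M), ?_⟩
        rintro r ⟨y, rfl⟩
        have h1 := abs_le.1 (hBb y); have h2 := abs_le.1 (hBb' y)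
        simp only
        linarith [h1.1, h1.2, h2.1, h2.2]
      set aJ := ⨅ y, (B (seq (n+1)) y - B (seq n) y) with haJdef
      have haJ : ∀ y, aJ ≤ B (seq (n+1)) y - B (seq n) y := fun y => ciInf_le hbdd2 y
      have haJub : ∀ y, B (seq (n+1)) y - B (seq n) y ≤ aJ + q * (2*M*q^n) := by
        intro y
        have hle : B (seq (n+1)) y - q * (2*M*q^n) - B (seq n) y ≤ aJ := by
          apply le_ciInf
          intro y'
          have := hcon1 y y'
          linarith
        linarith
      have hcon2 : ∀ x x', (A (B (seq (n+1))) x - A (B (seq n)) x)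
          - (A (B (seq (n+1))) x' - A (B (seq n)) x') ≤ q * (q * (2*M*q^n)) := by
        intro x x'
        have hX0 : (0:ℝ) ≤ 2*M*q^n := mul_nonneg (by linarith) hqn0
        have hq2 : q * (2*M*q^n) ≤ 2*M*q^n := mul_le_of_le_one_left hX0 hq1.le
        have hq3 : 2*M*q^n ≤ 2*M := by nlinarith
        have := T_contract (ρ := ρ₂) hε hM0 hc hcb hBm' hBm (U := 3*M) hBb' hBb
          haJ haJub (by linarith) x x'
        rw [← hqdef] at this
        have heq : q * (aJ + q * (2*M*q^n) - aJ) = q * (q * (2*M*q^n)) := by ring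
        linarith [heq ▸ this]
      intro x x'
      rw [hseqS (n+1)]
      show (A (B (seq (n+1))) x - A (B (seq (n+1))) x₀ - seq (n+1) x)
        - (A (B (seq (n+1))) x' - A (B (seq (n+1))) x₀ - seq (n+1) x') ≤ 2*M * q^(n+1)
      have hseqn1 : ∀ x, seq (n+1) x = A (B (seq n)) x - A (B (seq n)) x₀ := by
        intro x; rw [hseqS n]
      rw [hseqn1 x, hseqn1 x']
      have h2 := hcon2 x x'
      have hfin : q * (q * (2*M*q^n)) ≤ 2*M*q^(n+1) := by
        have hpow : q^(n+1) = q * q^n := by ring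
        rw [hpow]
        have hX0 : (0:ℝ) ≤ 2*M*q^n := mul_nonneg (by linarith) hqn0
        have h5 : 0 ≤ q * (2*M*q^n) := mul_nonneg hq0 hX0
        have h6 : q * (q * (2*M*q^n)) ≤ q * (2*M*q^n) := mul_le_of_le_one_left h5 hq1.le
        have h7 : 2*M*(q*q^n) = q * (2*M*q^n) := by ring
        linarith
      linarith
  -- uniform Cauchy and limit
  have hstep : ∀ n x, |seq (n+1) x - seq n x| ≤ 2*M * q^n := by
    intro n x
    have h1 := hJ n x x₀
    have h2 := hJ n x₀ x
    have hp := (hInv n).2.2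
    have hp' := (hInv (n+1)).2.2
    rw [abs_le]
    constructor
    · rw [hp, hp'] at h2; linarith
    · rw [hp, hp'] at h1; linarith
  have hcauchy : ∀ x, CauchySeq (fun n => seq n x) := by
    intro x
    apply cauchySeq_of_le_geometric q (2*M) hq1
    intro n
    rw [Real.dist_eq, abs_sub_comm]
    exact hstep n x
  set uu : X → ℝ := fun x => limUnder atTop (fun n => seq n x) with huudef
  have htend : ∀ x, Tendsto (fun n => seq n x) atTop (𝓝 (uu x)) :=
    fun x => (hcauchy x).tendsto_limUnder
  have hdist : ∀ n x, |seq n x - uu x| ≤ 2*M*q^n / (1-q) := by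
    intro n x
    have := dist_le_of_le_geometric_of_tendsto q (2*M) hq1
      (fun m => by rw [Real.dist_eq, abs_sub_comm]; exact hstep m x) (htend x) n
    rwa [Real.dist_eq] at this
  have huum : Measurable uu :=
    measurable_of_tendsto_metrizable (fun n => (hInv n).1) (tendsto_pi_nhds.2 htend)
  have huub : ∀ x, |uu x| ≤ 2*M := by
    intro x
    exact le_of_tendsto (htend x).abs
      (Filter.Eventually.of_forall (fun n => (hInv n).2.1 x))
  have huup : uu x₀ = 0 := by
    have h0 : Tendsto (fun n => seq n x₀) atTop (𝓝 (0:ℝ)) := by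
      have he : (fun n => seq n x₀) = fun _ => (0:ℝ) := funext (fun n => (hInv n).2.2)
      rw [he]; exact tendsto_const_nhds
    exact tendsto_nhds_unique (htend x₀) h0
  obtain ⟨hBuum, hBuub⟩ := hBmb uu huum huub
  have hfix : ∀ x, A (B uu) x - A (B uu) x₀ = uu x := by
    intro x
    have key : ∀ n, |(A (B uu) x - A (B uu) x₀) - seq (n+1) x|
        ≤ (4*M/(1-q)) * q^n := by
      intro n
      obtain ⟨hm, hb, _⟩ := hInv n
      obtain ⟨hBm, hBb⟩ := hBmb (seq n) hm hb
      have hd : ∀ z, |uu z - seq n z| ≤ 2*M*q^n/(1-q) :=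
        fun z => by rw [abs_sub_comm]; exact hdist n z
      have h1 : ∀ y, |B uu y - B (seq n) y| ≤ 2*M*q^n/(1-q) :=
        fun y => T_nonexp hε hkB hkBb huum hm (U := 2*M) huub hb hd y
      have h2 : ∀ x', |A (B uu) x' - A (B (seq n)) x'| ≤ 2*M*q^n/(1-q) :=
        fun x' => T_nonexp hε hc hcb hBuum hBm (U := 3*M) hBuub hBb h1 x'
      rw [hseqS n]
      show |(A (B uu) x - A (B uu) x₀) - (A (B (seq n)) x - A (B (seq n)) x₀)|
        ≤ (4*M/(1-q)) * q^n
      have h3 := abs_le.1 (h2 x)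
      have h4 := abs_le.1 (h2 x₀)
      have heq : (4*M/(1-q)) * q^n = 2*(2*M*q^n/(1-q)) := by
        field_simp
        ring
      rw [heq, abs_le]
      constructor <;> [linarith [h3.1, h4.2]; linarith [h3.2, h4.1]]
    have hlim2 : Tendsto (fun n => seq (n+1) x) atTop (𝓝 (uu x)) :=
      (htend x).comp (tendsto_add_atTop_nat 1)
    have habs : Tendsto (fun n => |(A (B uu) x - A (B uu) x₀) - seq (n+1) x|)
        atTop (𝓝 |(A (B uu) x - A (B uu) x₀) - uu x|) :=
      (tendsto_const_nhds.sub hlim2).abs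
    have hzero : Tendsto (fun n => (4*M/(1-q)) * q^n) atTop (𝓝 (0:ℝ)) := by
      have hq := tendsto_pow_atTop_nhds_zero_of_lt_one hq0 hq1
      simpa using hq.const_mul (4*M/(1-q))
    have hle : |(A (B uu) x - A (B uu) x₀) - uu x| ≤ 0 :=
      le_of_tendsto_of_tendsto' habs hzero key
    have h0 : |(A (B uu) x - A (B uu) x₀) - uu x| = 0 :=
      le_antisymm hle (abs_nonneg _)
    rw [abs_eq_zero, sub_eq_zero] at h0
    exact h0
  -- Schroedinger system
  set vv : Y → ℝ := B uu with hvvdef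
  have hvvm : Measurable vv := hBuum
  have hvvb : ∀ y, |vv y| ≤ 3*M := hBuub
  set CC : ℝ := A (B uu) x₀ with hCCdef
  have hAvv : ∀ x, T ε ρ₂ c vv x = uu x + CC := by
    intro x
    have h := hfix x
    have h2 : T ε ρ₂ c vv x = A (B uu) x := rfl
    rw [h2]
    linarith
  have hBvv : ∀ y, T ε ρ₁ kB uu y = vv y := fun y => rfl
  have hS1 : ∀ y, ∫ x, exp ((uu x + vv y - c x y) / ε) ∂ρ₁ = 1 := by
    intro y
    have hpt : ∀ x, exp ((uu x + vv y - c x y) / ε)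
        = exp (vv y / ε) * exp ((uu x - kB y x) / ε) := by
      intro x
      rw [← exp_add]
      congr 1
      simp only [hkBdef]
      ring
    rw [integral_congr_ae (ae_of_all _ hpt), integral_const_mul]
    rw [← T_exp (ρ := ρ₁) hε hkB hkBb huum (U := 2*M) huub y, hBvv y, ← exp_add]
    have harg : vv y / ε + -vv y / ε = 0 := by ring
    rw [harg, exp_zero]
  have hS2 : ∀ x, ∫ y, exp ((uu x + vv y - c x y) / ε) ∂ρ₂ = exp (-CC / ε) := by
    intro x
    have hpt : ∀ y, exp ((uu x + vv y - c x y) / ε)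
        = exp (uu x / ε) * exp ((vv y - c x y) / ε) := by
      intro y
      rw [← exp_add]
      congr 1
      ring
    rw [integral_congr_ae (ae_of_all _ hpt), integral_const_mul]
    rw [← T_exp (ρ := ρ₂) hε hc hcb hvvm (U := 3*M) hvvb x, hAvv x, ← exp_add]
    congr 1
    ring
  -- Fubini gives CC = 0
  have hfm : Measurable fun p : X × Y => exp ((uu p.1 + vv p.2 - c p.1 p.2) / ε) :=
    ((((huum.comp measurable_fst).add (hvvm.comp measurable_snd)).sub hc).div_const ε).exp
  have hfb : ∀ p : X × Y, |exp ((uu p.1 + vv p.2 - c p.1 p.2) / ε)| ≤ exp ((6*M) / ε) := by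
    intro p
    rw [abs_of_pos (exp_pos _)]
    apply exp_le_exp.2
    apply (div_le_div_iff_of_pos_right hε).2
    have h1 := abs_le.1 (huub p.1)
    have h2 := abs_le.1 (hvvb p.2)
    have h3 := abs_le.1 (hM p.1 p.2)
    linarith [h1.1, h1.2, h2.1, h2.2, h3.1, h3.2]
  have hfint : Integrable (fun p : X × Y => exp ((uu p.1 + vv p.2 - c p.1 p.2) / ε))
      (ρ₁.prod ρ₂) := integrable_of_bounds hfm hfb
  have hIprod1 : ∫ p : X × Y, exp ((uu p.1 + vv p.2 - c p.1 p.2) / ε) ∂(ρ₁.prod ρ₂)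
      = exp (-CC / ε) := by
    rw [integral_prod _ hfint]
    rw [integral_congr_ae (ae_of_all _ (fun x => hS2 x))]
    simp
  have hIprod2 : ∫ p : X × Y, exp ((uu p.1 + vv p.2 - c p.1 p.2) / ε) ∂(ρ₁.prod ρ₂)
      = 1 := by
    rw [integral_prod_symm _ hfint]
    rw [integral_congr_ae (ae_of_all _ (fun y => hS1 y))]
    simp
  have hCC0 : CC = 0 := by
    have hexp1 : exp (-CC / ε) = 1 := by rw [← hIprod1, hIprod2]
    rw [Real.exp_eq_one_iff] at hexp1
    rcases div_eq_zero_iff.1 hexp1 with h | h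
    · linarith [neg_eq_zero.1 h]
    · exact absurd h hε.ne'
  have hS2' : ∀ x, ∫ y, exp ((uu x + vv y - c x y) / ε) ∂ρ₂ = 1 := by
    intro x
    rw [hS2 x, hCC0]
    simp
  -- recentering
  set Ev := ∫ y, exp (vv y / ε) ∂ρ₂ with hEvdef
  set Eu := ∫ x, exp (uu x / ε) ∂ρ₁ with hEudef
  have hEv : 0 < Ev := int_exp_self_pos hε hvvm hvvb
  have hEu : 0 < Eu := int_exp_self_pos hε huum huub
  set w := -ε * Real.log Ev with hwdef
  set z := -ε * Real.log Eu with hzdef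
  have hucen : ∀ x, |uu x - w| ≤ M := by
    intro x
    have h := T_center (ρ := ρ₂) hε hc hcb hvvm (U := 3*M) hvvb x
    have hA : T ε ρ₂ c vv x = uu x := by rw [hAvv x, hCC0]; ring
    rw [hA] at h
    exact h
  have hvcen : ∀ y, |vv y - z| ≤ M := by
    intro y
    have h := T_center (ρ := ρ₁) hε hkB hkBb huum (U := 2*M) huub y
    rw [hBvv y] at h
    exact h
  have hEuexp : Eu = exp (-z / ε) := by
    have harg : -z / ε = Real.log Eu := by rw [hzdef]; field_simp
    rw [harg, exp_log hEu]
  have hEvexp : Ev = exp (-w / ε) := by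
    have harg : -w / ε = Real.log Ev := by rw [hwdef]; field_simp
    rw [harg, exp_log hEv]
  have hmulm : Measurable fun p : X × Y => exp (uu p.1 / ε) * exp (vv p.2 / ε) :=
    (((huum.comp measurable_fst).div_const ε).exp).mul
      (((hvvm.comp measurable_snd).div_const ε).exp)
  have hmulb : ∀ p : X × Y, |exp (uu p.1 / ε) * exp (vv p.2 / ε)| ≤ exp ((5*M)/ε) := by
    intro p
    rw [abs_of_pos (by positivity), ← exp_add, ← add_div]
    apply exp_le_exp.2
    apply (div_le_div_iff_of_pos_right hε).2
    have h1 := abs_le.1 (huub p.1)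
    have h2 := abs_le.1 (hvvb p.2)
    linarith [h1.2, h2.2]
  have hmulint : Integrable (fun p : X × Y => exp (uu p.1 / ε) * exp (vv p.2 / ε))
      (ρ₁.prod ρ₂) := integrable_of_bounds hmulm hmulb
  have hprodmul : ∫ p : X × Y, exp (uu p.1 / ε) * exp (vv p.2 / ε) ∂(ρ₁.prod ρ₂)
      = Eu * Ev := by
    rw [hEudef, hEvdef]
    exact integral_prod_mul (fun x => exp (uu x / ε)) (fun y => exp (vv y / ε))
  have hup1 : (1:ℝ) ≤ exp (M / ε) * (Eu * Ev) := by
    rw [← hIprod2, ← hprodmul, ← integral_const_mul]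
    apply integral_mono hfint (hmulint.const_mul _)
    intro p
    show exp ((uu p.1 + vv p.2 - c p.1 p.2) / ε)
      ≤ exp (M / ε) * (exp (uu p.1 / ε) * exp (vv p.2 / ε))
    rw [← exp_add, ← exp_add]
    apply exp_le_exp.2
    have h3 := abs_le.1 (hM p.1 p.2)
    rw [← add_div, ← add_div]
    exact (div_le_div_iff_of_pos_right hε).2 (by linarith [h3.1])
  have hlo1 : exp (-M / ε) * (Eu * Ev) ≤ 1 := by
    rw [← hIprod2, ← hprodmul, ← integral_const_mul]
    apply integral_mono (hmulint.const_mul _) hfint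
    intro p
    show exp (-M / ε) * (exp (uu p.1 / ε) * exp (vv p.2 / ε))
      ≤ exp ((uu p.1 + vv p.2 - c p.1 p.2) / ε)
    rw [← exp_add, ← exp_add]
    apply exp_le_exp.2
    have h3 := abs_le.1 (hM p.1 p.2)
    rw [← add_div, ← add_div]
    exact (div_le_div_iff_of_pos_right hε).2 (by linarith [h3.2])
  have hzw : |z + w| ≤ M := by
    have e1 : exp (M / ε) * (Eu * Ev) = exp ((M - z - w) / ε) := by
      rw [hEuexp, hEvexp, ← exp_add, ← exp_add]
      congr 1
      field_simp
      ring
    have e2 : exp (-M / ε) * (Eu * Ev) = exp ((-M - z - w) / ε) := by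
      rw [hEuexp, hEvexp, ← exp_add, ← exp_add]
      congr 1
      field_simp
      ring
    rw [e1] at hup1
    rw [e2] at hlo1
    have h1 : (0:ℝ) ≤ (M - z - w) / ε := by
      rwa [← Real.exp_zero, Real.exp_le_exp] at hup1
    have h2 : (-M - z - w) / ε ≤ 0 := by
      rwa [← Real.exp_zero, Real.exp_le_exp] at hlo1
    have e3 : ε * ((M - z - w) / ε) = M - z - w := by field_simp
    have e4 : ε * ((-M - z - w) / ε) = -M - z - w := by
      field_simp
    have h3 := mul_le_mul_of_nonneg_left h1 hε.le
    have h4 := mul_le_mul_of_nonneg_left h2 hε.le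
    rw [e3] at h3
    rw [e4] at h4
    simp only [mul_zero] at h3 h4
    rw [abs_le]
    constructor <;> linarith
  have harg : ∀ x y, ((uu x - w + (z + w)/2) + (vv y + w - (z + w)/2) - c x y) / ε
      = (uu x + vv y - c x y) / ε := fun x y => by ring
  refine ⟨fun x => uu x - w + (z + w)/2, fun y => vv y + w - (z + w)/2,
    (huum.sub measurable_const).add measurable_const,
    (hvvm.add measurable_const).sub measurable_const, ?_, ?_, ?_, ?_⟩
  · intro x
    show |uu x - w + (z + w)/2| ≤ 3/2 * M
    have h1 := abs_le.1 (hucen x)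
    have h2 := abs_le.1 hzw
    rw [abs_le]
    constructor
    · linarith [h1.1, h2.1]
    · linarith [h1.2, h2.2]
  · intro y
    show |vv y + w - (z + w)/2| ≤ 3/2 * M
    have h1 := abs_le.1 (hvcen y)
    have h2 := abs_le.1 hzw
    rw [abs_le]
    constructor
    · linarith [h1.1, h2.1]
    · linarith [h1.2, h2.2]
  · intro y
    show ∫ x, exp (((uu x - w + (z + w)/2) + (vv y + w - (z + w)/2) - c x y) / ε) ∂ρ₁ = 1
    simp only [harg]
    exact hS1 y
  · intro x
    show ∫ y, exp (((uu x - w + (z + w)/2) + (vv y + w - (z + w)/2) - c x y) / ε) ∂ρ₂ = 1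
    simp only [harg]
    exact hS2' x

lemma integrable_fst' {ρ₁ : Measure X} {ρ₂ : Measure Y} [IsProbabilityMeasure ρ₁]
    [IsProbabilityMeasure ρ₂] {f : X → ℝ} (hf : Integrable f ρ₁) :
    Integrable (fun p : X × Y => f p.1) (ρ₁.prod ρ₂) := by
  have hmp : MeasurePreserving (Prod.fst : X × Y → X) (ρ₁.prod ρ₂) ρ₁ :=
    ⟨measurable_fst, by simp⟩
  exact (hmp.integrable_comp hf.1).2 hf

lemma integrable_snd' {ρ₁ : Measure X} {ρ₂ : Measure Y} [IsProbabilityMeasure ρ₁]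
    [IsProbabilityMeasure ρ₂] {f : Y → ℝ} (hf : Integrable f ρ₂) :
    Integrable (fun p : X × Y => f p.2) (ρ₁.prod ρ₂) := by
  have hmp : MeasurePreserving (Prod.snd : X × Y → Y) (ρ₁.prod ρ₂) ρ₂ :=
    ⟨measurable_snd, by simp⟩
  exact (hmp.integrable_comp hf.1).2 hf

set_option maxHeartbeats 1000000 in
lemma schroedinger_opt (ρ₁ : Measure X) [IsProbabilityMeasure ρ₁]
    (ρ₂ : Measure Y) [IsProbabilityMeasure ρ₂] (ε : ℝ) (c : X → Y → ℝ) (M K : ℝ)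
    (hε : 0 < ε) (hc : Measurable (Function.uncurry c)) (hM : ∀ x y, |c x y| ≤ M)
    (u₀ : X → ℝ) (v₀ : Y → ℝ) (hu₀m : Measurable u₀) (hv₀m : Measurable v₀)
    (hu₀b : ∀ x, |u₀ x| ≤ K) (hv₀b : ∀ y, |v₀ y| ≤ K)
    (hS1 : ∀ y, ∫ x, exp ((u₀ x + v₀ y - c x y) / ε) ∂ρ₁ = 1)
    (hS2 : ∀ x, ∫ y, exp ((u₀ x + v₀ y - c x y) / ε) ∂ρ₂ = 1)
    (u : X → ℝ) (v : Y → ℝ) (hum : Measurable u) (hvm : Measurable v)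
    (hui : Integrable u ρ₁) (hvi : Integrable v ρ₂)
    (hEi : Integrable (fun p : X × Y => exp ((u p.1 + v p.2 - c p.1 p.2) / ε))
      (ρ₁.prod ρ₂)) :
    1 + ((∫ x, u x ∂ρ₁ - ∫ x, u₀ x ∂ρ₁) + (∫ y, v y ∂ρ₂ - ∫ y, v₀ y ∂ρ₂)) / ε
      ≤ ∫ p : X × Y, exp ((u p.1 + v p.2 - c p.1 p.2) / ε) ∂(ρ₁.prod ρ₂) ∧
    (∫ p : X × Y, exp ((u p.1 + v p.2 - c p.1 p.2) / ε) ∂(ρ₁.prod ρ₂)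
        = 1 + ((∫ x, u x ∂ρ₁ - ∫ x, u₀ x ∂ρ₁) + (∫ y, v y ∂ρ₂ - ∫ y, v₀ y ∂ρ₂)) / ε →
      ∃ a : ℝ, u =ᵐ[ρ₁] (fun x => u₀ x + a) ∧ v =ᵐ[ρ₂] (fun y => v₀ y - a)) := by
  have hu₀i : Integrable u₀ ρ₁ := integrable_of_bounds hu₀m hu₀b
  have hv₀i : Integrable v₀ ρ₂ := integrable_of_bounds hv₀m hv₀b
  have hR₀m : Measurable fun p : X × Y => exp ((u₀ p.1 + v₀ p.2 - c p.1 p.2) / ε) :=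
    ((((hu₀m.comp measurable_fst).add (hv₀m.comp measurable_snd)).sub hc).div_const ε).exp
  have hR₀b : ∀ p : X × Y, |exp ((u₀ p.1 + v₀ p.2 - c p.1 p.2) / ε)|
      ≤ exp ((2*K + M) / ε) := by
    intro p
    rw [abs_of_pos (exp_pos _)]
    apply exp_le_exp.2
    apply (div_le_div_iff_of_pos_right hε).2
    have h1 := abs_le.1 (hu₀b p.1)
    have h2 := abs_le.1 (hv₀b p.2)
    have h3 := abs_le.1 (hM p.1 p.2)
    linarith [h1.2, h2.2, h3.1]
  have hR₀int : Integrable (fun p : X × Y => exp ((u₀ p.1 + v₀ p.2 - c p.1 p.2) / ε))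
      (ρ₁.prod ρ₂) := integrable_of_bounds hR₀m hR₀b
  have hI₀ : ∫ p : X × Y, exp ((u₀ p.1 + v₀ p.2 - c p.1 p.2) / ε) ∂(ρ₁.prod ρ₂) = 1 := by
    rw [integral_prod _ hR₀int]
    rw [integral_congr_ae (ae_of_all _ (fun x => hS2 x))]
    simp
  -- weighted marginal integrals
  have hgum : Integrable (fun p : X × Y =>
      exp ((u₀ p.1 + v₀ p.2 - c p.1 p.2) / ε) * (u p.1 - u₀ p.1)) (ρ₁.prod ρ₂) :=
    Integrable.bdd_mul ((integrable_fst' hui).sub (integrable_fst' hu₀i))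
      hR₀m.aestronglyMeasurable
      (ae_of_all _ fun p => by rw [norm_eq_abs]; exact hR₀b p)
  have hgvm : Integrable (fun p : X × Y =>
      exp ((u₀ p.1 + v₀ p.2 - c p.1 p.2) / ε) * (v p.2 - v₀ p.2)) (ρ₁.prod ρ₂) :=
    Integrable.bdd_mul ((integrable_snd' hvi).sub (integrable_snd' hv₀i))
      hR₀m.aestronglyMeasurable
      (ae_of_all _ fun p => by rw [norm_eq_abs]; exact hR₀b p)
  have hintu : ∫ p : X × Y, exp ((u₀ p.1 + v₀ p.2 - c p.1 p.2) / ε) * (u p.1 - u₀ p.1)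
      ∂(ρ₁.prod ρ₂) = (∫ x, u x ∂ρ₁ - ∫ x, u₀ x ∂ρ₁) := by
    rw [integral_prod _ hgum]
    have hinner : ∀ x, ∫ y, exp ((u₀ x + v₀ y - c x y) / ε) * (u x - u₀ x) ∂ρ₂
        = u x - u₀ x := by
      intro x
      rw [integral_mul_const, hS2 x, one_mul]
    rw [integral_congr_ae (ae_of_all _ hinner), integral_sub hui hu₀i]
  have hintv : ∫ p : X × Y, exp ((u₀ p.1 + v₀ p.2 - c p.1 p.2) / ε) * (v p.2 - v₀ p.2)
      ∂(ρ₁.prod ρ₂) = (∫ y, v y ∂ρ₂ - ∫ y, v₀ y ∂ρ₂) := by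
    rw [integral_prod_symm _ hgvm]
    have hinner : ∀ y, ∫ x, exp ((u₀ x + v₀ y - c x y) / ε) * (v y - v₀ y) ∂ρ₁
        = v y - v₀ y := by
      intro y
      rw [integral_mul_const, hS1 y, one_mul]
    rw [integral_congr_ae (ae_of_all _ hinner), integral_sub hvi hv₀i]
  -- the affine minorant
  have hlhs_eq : (fun p : X × Y => exp ((u₀ p.1 + v₀ p.2 - c p.1 p.2) / ε)
      * (1 + ((u p.1 - u₀ p.1) + (v p.2 - v₀ p.2)) / ε))
      =ᵐ[ρ₁.prod ρ₂] fun p : X × Y => exp ((u₀ p.1 + v₀ p.2 - c p.1 p.2) / ε)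
      + ((exp ((u₀ p.1 + v₀ p.2 - c p.1 p.2) / ε) * (u p.1 - u₀ p.1)) * ε⁻¹
        + (exp ((u₀ p.1 + v₀ p.2 - c p.1 p.2) / ε) * (v p.2 - v₀ p.2)) * ε⁻¹) := by
    apply ae_of_all
    intro p
    ring
  have hBint : Integrable (fun p : X × Y =>
      exp ((u₀ p.1 + v₀ p.2 - c p.1 p.2) / ε) * (u p.1 - u₀ p.1) * ε⁻¹) (ρ₁.prod ρ₂) :=
    hgum.mul_const ε⁻¹
  have hCint : Integrable (fun p : X × Y =>
      exp ((u₀ p.1 + v₀ p.2 - c p.1 p.2) / ε) * (v p.2 - v₀ p.2) * ε⁻¹) (ρ₁.prod ρ₂) :=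
    hgvm.mul_const ε⁻¹
  have hBCint : Integrable (fun p : X × Y =>
      exp ((u₀ p.1 + v₀ p.2 - c p.1 p.2) / ε) * (u p.1 - u₀ p.1) * ε⁻¹
      + exp ((u₀ p.1 + v₀ p.2 - c p.1 p.2) / ε) * (v p.2 - v₀ p.2) * ε⁻¹) (ρ₁.prod ρ₂) :=
    hBint.add hCint
  have hlhsint : Integrable (fun p : X × Y => exp ((u₀ p.1 + v₀ p.2 - c p.1 p.2) / ε)
      * (1 + ((u p.1 - u₀ p.1) + (v p.2 - v₀ p.2)) / ε)) (ρ₁.prod ρ₂) :=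
    (hR₀int.add hBCint).congr hlhs_eq.symm
  have hIlhs : ∫ p : X × Y, exp ((u₀ p.1 + v₀ p.2 - c p.1 p.2) / ε)
      * (1 + ((u p.1 - u₀ p.1) + (v p.2 - v₀ p.2)) / ε) ∂(ρ₁.prod ρ₂)
      = 1 + ((∫ x, u x ∂ρ₁ - ∫ x, u₀ x ∂ρ₁) + (∫ y, v y ∂ρ₂ - ∫ y, v₀ y ∂ρ₂)) / ε := by
    rw [integral_congr_ae hlhs_eq]
    rw [integral_add hR₀int hBCint, integral_add hBint hCint,
      integral_mul_const, integral_mul_const, hI₀, hintu, hintv]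
    ring
  have hpt : ∀ p : X × Y, exp ((u₀ p.1 + v₀ p.2 - c p.1 p.2) / ε)
      * (1 + ((u p.1 - u₀ p.1) + (v p.2 - v₀ p.2)) / ε)
      ≤ exp ((u p.1 + v p.2 - c p.1 p.2) / ε) := by
    intro p
    have hsplit : exp ((u p.1 + v p.2 - c p.1 p.2) / ε)
        = exp ((u₀ p.1 + v₀ p.2 - c p.1 p.2) / ε)
          * exp (((u p.1 - u₀ p.1) + (v p.2 - v₀ p.2)) / ε) := by
      rw [← exp_add]
      congr 1
      ring
    rw [hsplit]
    apply mul_le_mul_of_nonneg_left _ (exp_pos _).le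
    have h := Real.add_one_le_exp (((u p.1 - u₀ p.1) + (v p.2 - v₀ p.2)) / ε)
    linarith
  constructor
  · rw [← hIlhs]
    exact integral_mono hlhsint hEi hpt
  · intro heq
    have hφint : Integrable (fun p : X × Y => exp ((u p.1 + v p.2 - c p.1 p.2) / ε)
        - exp ((u₀ p.1 + v₀ p.2 - c p.1 p.2) / ε)
          * (1 + ((u p.1 - u₀ p.1) + (v p.2 - v₀ p.2)) / ε)) (ρ₁.prod ρ₂) :=
      hEi.sub hlhsint
    have hφ0 : 0 ≤ fun p : X × Y => exp ((u p.1 + v p.2 - c p.1 p.2) / ε)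
        - exp ((u₀ p.1 + v₀ p.2 - c p.1 p.2) / ε)
          * (1 + ((u p.1 - u₀ p.1) + (v p.2 - v₀ p.2)) / ε) := by
      intro p
      have := hpt p
      simp only [Pi.zero_apply]
      linarith
    have hφI : ∫ p : X × Y, (exp ((u p.1 + v p.2 - c p.1 p.2) / ε)
        - exp ((u₀ p.1 + v₀ p.2 - c p.1 p.2) / ε)
          * (1 + ((u p.1 - u₀ p.1) + (v p.2 - v₀ p.2)) / ε)) ∂(ρ₁.prod ρ₂) = 0 := by
      rw [integral_sub hEi hlhsint, hIlhs, heq]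
      ring
    have hae0 := (integral_eq_zero_iff_of_nonneg hφ0 hφint).1 hφI
    have hae : ∀ᵐ p ∂(ρ₁.prod ρ₂), u p.1 - u₀ p.1 = v₀ p.2 - v p.2 := by
      have hae1 : ∀ᵐ p ∂(ρ₁.prod ρ₂), (fun p : X × Y => exp ((u p.1 + v p.2 - c p.1 p.2) / ε)
          - exp ((u₀ p.1 + v₀ p.2 - c p.1 p.2) / ε)
            * (1 + ((u p.1 - u₀ p.1) + (v p.2 - v₀ p.2)) / ε)) p = 0 := hae0
      filter_upwards [hae1] with p hp
      replace hp : exp ((u p.1 + v p.2 - c p.1 p.2) / ε)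
          - exp ((u₀ p.1 + v₀ p.2 - c p.1 p.2) / ε)
            * (1 + ((u p.1 - u₀ p.1) + (v p.2 - v₀ p.2)) / ε) = 0 := hp
      set s := (u p.1 - u₀ p.1) + (v p.2 - v₀ p.2) with hsdef
      have hsplit : exp ((u p.1 + v p.2 - c p.1 p.2) / ε)
          = exp ((u₀ p.1 + v₀ p.2 - c p.1 p.2) / ε) * exp (s / ε) := by
        rw [← exp_add]
        congr 1
        rw [hsdef]
        ring
      rw [hsplit] at hp
      have hR₀pos : 0 < exp ((u₀ p.1 + v₀ p.2 - c p.1 p.2) / ε) := exp_pos _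
      have hexp1 : exp (s / ε) = 1 + s / ε := by
        have hfac : exp ((u₀ p.1 + v₀ p.2 - c p.1 p.2) / ε) * (exp (s/ε) - (1 + s/ε)) = 0 := by
          linarith [hp]
        rcases mul_eq_zero.1 hfac with h | h
        · exact absurd h hR₀pos.ne'
        · linarith
      have hs0 : s / ε = 0 := by
        by_contra hne
        have := Real.add_one_lt_exp hne
        linarith
      have hs : s = 0 := by
        rcases div_eq_zero_iff.1 hs0 with h | h
        · exact h
        · exact absurd h hε.ne'
      rw [hsdef] at hs
      linarith
    have h1 := Measure.ae_ae_of_ae_prod hae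
    set a := ∫ y, (v₀ y - v y) ∂ρ₂ with hadef
    have hu_ae : ∀ᵐ x ∂ρ₁, u x - u₀ x = a := by
      filter_upwards [h1] with x hx
      have : ∫ y, (v₀ y - v y) ∂ρ₂ = ∫ _y, (u x - u₀ x) ∂ρ₂ := by
        apply integral_congr_ae
        filter_upwards [hx] with y hy
        rw [← hy]
      rw [hadef, this]
      simp
    have h2 := h1.and hu_ae
    obtain ⟨x₁, hx1, hx2⟩ := h2.exists
    have hv_ae : ∀ᵐ y ∂ρ₂, v₀ y - v y = a := by
      filter_upwards [hx1] with y hy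
      rw [← hy, hx2]
    refine ⟨a, ?_, ?_⟩
    · filter_upwards [hu_ae] with x hx
      show u x = u₀ x + a
      linarith
    · filter_upwards [hv_ae] with y hy
      show v y = v₀ y - a
      linarith

end Main

end EKDual

open EKDual in
set_option maxHeartbeats 1000000 in
theorem dual_maximizer_exists_unique
    {X Y : Type*}
    [MeasurableSpace X] [TopologicalSpace X] [PolishSpace X] [BorelSpace X]
    [MeasurableSpace Y] [TopologicalSpace Y] [PolishSpace Y] [BorelSpace Y]
    (ρ₁ : Measure X) [IsProbabilityMeasure ρ₁]
    (ρ₂ : Measure Y) [IsProbabilityMeasure ρ₂]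
    (ε : ℝ) (hε : 0 < ε)
    (c : X → Y → ℝ) (hc : Measurable (Function.uncurry c))
    (M : ℝ) (hM : ∀ x y, |c x y| ≤ M) :
    ∃ (u₀ : X → ℝ) (v₀ : Y → ℝ),
      Lexp ε ρ₁ u₀ ∧ Lexp ε ρ₂ v₀ ∧
      (∀ x, |u₀ x| ≤ 3 / 2 * M) ∧ (∀ y, |v₀ y| ≤ 3 / 2 * M) ∧
      (∀ (u : X → ℝ) (v : Y → ℝ), Lexp ε ρ₁ u → Lexp ε ρ₂ v →
        Dext ρ₁ ρ₂ c ε u v ≤ Dext ρ₁ ρ₂ c ε u₀ v₀) ∧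
      (∀ (u : X → ℝ) (v : Y → ℝ), Lexp ε ρ₁ u → Lexp ε ρ₂ v →
        Dext ρ₁ ρ₂ c ε u v = Dext ρ₁ ρ₂ c ε u₀ v₀ →
        ∃ a : ℝ, u =ᵐ[ρ₁] (fun x => u₀ x + a) ∧ v =ᵐ[ρ₂] (fun y => v₀ y - a)) := by
  obtain ⟨u₀, v₀, hu₀m, hv₀m, hu₀b, hv₀b, hS1, hS2⟩ :=
    exists_schroedinger ρ₁ ρ₂ ε c M hε hc hM
  have hb32 : ∀ x, |u₀ x| ≤ 3/2*M := fun x => by have := hu₀b x; linarith [this]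
  have hLu₀ : Lexp ε ρ₁ u₀ :=
    ⟨hu₀m, int_exp_self hε hu₀m hu₀b, int_exp_self_pos hε hu₀m hu₀b⟩
  have hLv₀ : Lexp ε ρ₂ v₀ :=
    ⟨hv₀m, int_exp_self hε hv₀m hv₀b, int_exp_self_pos hε hv₀m hv₀b⟩
  have hu₀i : Integrable u₀ ρ₁ := integrable_of_bounds hu₀m hu₀b
  have hv₀i : Integrable v₀ ρ₂ := integrable_of_bounds hv₀m hv₀b
  obtain ⟨x₀⟩ := nonempty_of_prob ρ₁
  obtain ⟨y₀⟩ := nonempty_of_prob ρ₂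
  have hM0 : 0 ≤ M := le_trans (abs_nonneg _) (hM x₀ y₀)
  have hR₀m : Measurable fun p : X × Y => Real.exp ((u₀ p.1 + v₀ p.2 - c p.1 p.2) / ε) :=
    ((((hu₀m.comp measurable_fst).add (hv₀m.comp measurable_snd)).sub hc).div_const ε).exp
  have hR₀b : ∀ p : X × Y, |Real.exp ((u₀ p.1 + v₀ p.2 - c p.1 p.2) / ε)|
      ≤ Real.exp ((2*(3/2*M) + M) / ε) := by
    intro p
    rw [abs_of_pos (exp_pos _)]
    apply exp_le_exp.2
    apply (div_le_div_iff_of_pos_right hε).2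
    have h1 := abs_le.1 (hu₀b p.1)
    have h2 := abs_le.1 (hv₀b p.2)
    have h3 := abs_le.1 (hM p.1 p.2)
    linarith [h1.2, h2.2, h3.1]
  have hR₀int : Integrable (fun p : X × Y => Real.exp ((u₀ p.1 + v₀ p.2 - c p.1 p.2) / ε))
      (ρ₁.prod ρ₂) := integrable_of_bounds hR₀m hR₀b
  have hI₀ : ∫ p : X × Y, Real.exp ((u₀ p.1 + v₀ p.2 - c p.1 p.2) / ε) ∂(ρ₁.prod ρ₂)
      = 1 := by
    rw [integral_prod _ hR₀int]
    rw [integral_congr_ae (ae_of_all _ (fun x => hS2 x))]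
    simp
  have hcond₀ : Integrable u₀ ρ₁ ∧ Integrable v₀ ρ₂ ∧
      Integrable (fun p : X × Y => Real.exp ((u₀ p.1 + v₀ p.2 - c p.1 p.2) / ε))
        (ρ₁.prod ρ₂) := ⟨hu₀i, hv₀i, hR₀int⟩
  have hD₀ : Dext ρ₁ ρ₂ c ε u₀ v₀
      = (((∫ x, u₀ x ∂ρ₁) + (∫ y, v₀ y ∂ρ₂) - ε : ℝ) : EReal) := by
    rw [Dext, if_pos hcond₀, hI₀, mul_one]
  refine ⟨u₀, v₀, hLu₀, hLv₀, hb32, fun y => by have := hv₀b y; linarith [this], ?_, ?_⟩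
  · intro u v hLu hLv
    by_cases hcond : Integrable u ρ₁ ∧ Integrable v ρ₂ ∧
        Integrable (fun p : X × Y => Real.exp ((u p.1 + v p.2 - c p.1 p.2) / ε))
          (ρ₁.prod ρ₂)
    · obtain ⟨hui, hvi, hEi⟩ := hcond
      have hopt := (schroedinger_opt ρ₁ ρ₂ ε c M (3/2*M) hε hc hM u₀ v₀ hu₀m hv₀m
        hu₀b hv₀b hS1 hS2 u v hLu.1 hLv.1 hui hvi hEi).1
      rw [Dext, if_pos ⟨hui, hvi, hEi⟩, hD₀, EReal.coe_le_coe_iff]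
      have hεI := mul_le_mul_of_nonneg_left hopt hε.le
      have hexp : ε * (1 + ((∫ x, u x ∂ρ₁ - ∫ x, u₀ x ∂ρ₁)
          + (∫ y, v y ∂ρ₂ - ∫ y, v₀ y ∂ρ₂)) / ε)
          = ε + ((∫ x, u x ∂ρ₁ - ∫ x, u₀ x ∂ρ₁)
          + (∫ y, v y ∂ρ₂ - ∫ y, v₀ y ∂ρ₂)) := by
        field_simp
      rw [hexp] at hεI
      linarith
    · rw [Dext, if_neg hcond]
      exact bot_le
  · intro u v hLu hLv heq
    have hcond : Integrable u ρ₁ ∧ Integrable v ρ₂ ∧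
        Integrable (fun p : X × Y => Real.exp ((u p.1 + v p.2 - c p.1 p.2) / ε))
          (ρ₁.prod ρ₂) := by
      by_contra h
      rw [Dext, if_neg h, hD₀] at heq
      exact (EReal.bot_ne_coe _) heq
    obtain ⟨hui, hvi, hEi⟩ := hcond
    have hopt := schroedinger_opt ρ₁ ρ₂ ε c M (3/2*M) hε hc hM u₀ v₀ hu₀m hv₀m
      hu₀b hv₀b hS1 hS2 u v hLu.1 hLv.1 hui hvi hEi
    rw [Dext, if_pos ⟨hui, hvi, hEi⟩, hD₀, EReal.coe_eq_coe_iff] at heq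
    apply hopt.2
    apply mul_left_cancel₀ hε.ne'
    have hexp : ε * (1 + ((∫ x, u x ∂ρ₁ - ∫ x, u₀ x ∂ρ₁)
        + (∫ y, v y ∂ρ₂ - ∫ y, v₀ y ∂ρ₂)) / ε)
        = ε + ((∫ x, u x ∂ρ₁ - ∫ x, u₀ x ∂ρ₁)
        + (∫ y, v y ∂ρ₂ - ∫ y, v₀ y ∂ρ₂)) := by
      field_simp
    rw [hexp]
    linarith

end
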